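/- Let M be SPD and A real square with A + Aᵀ positive semidefinite, β > 0. With S = M + βAᵀM⁻¹A and Ŝ = (√βA+M)ᵀM⁻¹(√βA+M), every eigenvalue of Ŝ⁻¹S lies in the interval (0, 1]; in particular vᵀSv ≤ vᵀŜv for all v. -/

import Mathlib

open Matrix

lemma psd_smul' {n : ℕ} {c : ℝ} (hc : 0 ≤ c) {B : Matrix (Fin n) (Fin n) ℝ}
    (hB : B.PosSemidef) : (c • B).PosSemidef := by
  refine Matrix.PosSemidef.of_dotProduct_mulVec_nonneg ?_ (fun x => ?_)
  · unfold Matrix.IsHermitian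
    rw [conjTranspose_smul, hB.1]
    simp
  · rw [smul_mulVec, dotProduct_smul, smul_eq_mul]
    exact mul_nonneg hc (hB.dotProduct_mulVec_nonneg x)

theorem stmt5 {n : ℕ} (M A : Matrix (Fin n) (Fin n) ℝ) (β : ℝ) (hβ : 0 < β)
    (hM : M.PosDef) (hA : (A + Aᵀ).PosSemidef) :
    (∀ (lam : ℝ) (x : Fin n → ℝ), x ≠ 0 →
      (((((Real.sqrt β • A + M)ᵀ) * M⁻¹ * (Real.sqrt β • A + M))⁻¹ *
          (M + β • (Aᵀ * M⁻¹ * A))).mulVec x = lam • x) → 0 < lam ∧ lam ≤ 1) ∧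
    ∀ v : Fin n → ℝ,
      v ⬝ᵥ (M + β • (Aᵀ * M⁻¹ * A)).mulVec v ≤
        v ⬝ᵥ (((Real.sqrt β • A + M)ᵀ) * M⁻¹ * (Real.sqrt β • A + M)).mulVec v := by
  set s := Real.sqrt β with hs
  have hss : s * s = β := Real.mul_self_sqrt hβ.le
  have hsnn : 0 ≤ s := Real.sqrt_nonneg β
  set S : Matrix (Fin n) (Fin n) ℝ := M + β • (Aᵀ * M⁻¹ * A) with hSdef
  set T : Matrix (Fin n) (Fin n) ℝ := (s • A + M)ᵀ * M⁻¹ * (s • A + M) with hTdef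
  have hMt : Mᵀ = M := by
    have := hM.isHermitian
    rwa [Matrix.IsHermitian, conjTranspose_eq_transpose_of_trivial] at this
  have hdet : IsUnit M.det := (Matrix.isUnit_iff_isUnit_det M).mp hM.isUnit
  have h1 : M * M⁻¹ = 1 := mul_nonsing_inv M hdet
  have h2 : M⁻¹ * M = 1 := nonsing_inv_mul M hdet
  have hTS : T = S + s • (A + Aᵀ) := by
    have expand : (s • Aᵀ + M) * M⁻¹ * (s • A + M) =
        (s * s) • (Aᵀ * M⁻¹ * A) + s • (Aᵀ * (M⁻¹ * M)) + s • ((M * M⁻¹) * A)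
          + (M * M⁻¹) * M := by
      simp only [add_mul, mul_add, Matrix.smul_mul, Matrix.mul_smul, smul_smul, mul_assoc]
      abel
    rw [hTdef, transpose_add, transpose_smul, hMt, expand, h1, h2, hss, hSdef]
    simp only [mul_one, one_mul, smul_add]
    abel
  have hpsd1 : (Aᵀ * M⁻¹ * A).PosSemidef := by
    have := hM.inv.posSemidef.conjTranspose_mul_mul_same A
    rwa [conjTranspose_eq_transpose_of_trivial] at this
  have hSpd : S.PosDef := hM.add_posSemidef (psd_smul' hβ.le hpsd1)
  have hTpd : T.PosDef := by rw [hTS]; exact hSpd.add_posSemidef (psd_smul' hsnn hA)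
  have key : ∀ v : Fin n → ℝ, v ⬝ᵥ S.mulVec v ≤ v ⬝ᵥ T.mulVec v := by
    intro v
    have hsplit : v ⬝ᵥ T.mulVec v = v ⬝ᵥ S.mulVec v + v ⬝ᵥ (s • (A + Aᵀ)).mulVec v := by
      conv_lhs => rw [hTS, add_mulVec, dotProduct_add]
    have h0 : 0 ≤ v ⬝ᵥ (s • (A + Aᵀ)).mulVec v := by
      have := (psd_smul' hsnn hA).dotProduct_mulVec_nonneg v
      simpa using this
    linarith
  refine ⟨fun lam x hx h => ?_, key⟩
  have hTdet : IsUnit T.det := (Matrix.isUnit_iff_isUnit_det T).mp hTpd.isUnit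
  have hSx : S.mulVec x = lam • T.mulVec x := by
    have := congrArg (fun y => T.mulVec y) h
    simpa [mulVec_mulVec, ← Matrix.mul_assoc, mul_nonsing_inv T hTdet,
      Matrix.mulVec_smul] using this
  have ha : 0 < x ⬝ᵥ S.mulVec x := by have := hSpd.dotProduct_mulVec_pos hx; simpa using this
  have hb : 0 < x ⬝ᵥ T.mulVec x := by have := hTpd.dotProduct_mulVec_pos hx; simpa using this
  have heq : x ⬝ᵥ S.mulVec x = lam * (x ⬝ᵥ T.mulVec x) := by
    rw [hSx, dotProduct_smul, smul_eq_mul]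
  have hle := key x
  constructor
  · nlinarith
  · nlinarith
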